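/- Let R be a commutative ring and let I_Y ⊆ I_X be ideals of R with I_Y² ∩ I_X³ = I_Y²·I_X. Then the natural maps of R-modules form a short exact sequence 0 → I_Y²/(I_Y²·I_X) → (I_X·I_Y)/(I_X²·I_Y) → (I_X·I_Y)/(I_X²·I_Y + I_Y²) → 0; that is, the map induced by the inclusion I_Y² ⊆ I_X·I_Y (well defined since I_Y²·I_X ⊆ I_X²·I_Y) is injective, the further quotient map is surjective, and the image of the first map equals the kernel of the second. In particular the map I_Y²/(I_Y²·I_X) → (I_X·I_Y)/(I_X²·I_Y) is injective. -/

import Mathlib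

/-- The quotient of an ideal `J` (viewed as an `R`-module) by (its
intersection with) an ideal `K`. -/
abbrev subQuot {R : Type*} [CommRing R] (J K : Ideal R) : Type _ :=
  J ⧸ (Submodule.comap (J : Submodule R R).subtype K)

/-- The natural `R`-linear map `J/K → J'/K'` induced by an inclusion `J ≤ J'`,
well defined when `K ≤ K'`. -/
noncomputable def subQuotMap {R : Type*} [CommRing R] {J J' K K' : Ideal R}
    (hJ : J ≤ J') (hK : K ≤ K') :
    subQuot J K →ₗ[R] subQuot J' K' :=
  Submodule.mapQ _ _ (Submodule.inclusion hJ) (by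
    intro x hx
    simpa using hK hx)

/-- **(Bottom row of the paper's Lemma 6.3, "antisym 2".)**  Let `R` be a
commutative ring and `I_Y ⊆ I_X` ideals with `I_Y² ∩ I_X³ = I_Y²·I_X`.  Then
the natural maps form a short exact sequence
`0 → I_Y²/(I_Y²·I_X) → (I_X·I_Y)/(I_X²·I_Y) → (I_X·I_Y)/(I_X²·I_Y + I_Y²) → 0`:
the map induced by the inclusion `I_Y² ⊆ I_X·I_Y` is injective, the further
quotient map is surjective, and the image of the first equals the kernel of
the second.  In particular `I_Y²/(I_Y²·I_X) → (I_X·I_Y)/(I_X²·I_Y)` is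
injective. -/
theorem ses_of_sq_inclusion
    (R : Type*) [CommRing R] (IX IY : Ideal R) (hYX : IY ≤ IX)
    (h : IY ^ 2 ⊓ IX ^ 3 = IY ^ 2 * IX) :
    Function.Injective
        (subQuotMap (J := IY ^ 2) (J' := IX * IY) (K := IY ^ 2 * IX)
          (K' := IX ^ 2 * IY)
          (by rw [pow_two]; exact Ideal.mul_mono hYX le_rfl)
          (calc IY ^ 2 * IX
              ≤ IX * IY * IX :=
                Ideal.mul_mono (by rw [pow_two]; exact Ideal.mul_mono hYX le_rfl) le_rfl
            _ = IX ^ 2 * IY := by ring)) ∧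
      Function.Surjective
        (subQuotMap (J := IX * IY) (J' := IX * IY) (K := IX ^ 2 * IY)
          (K' := IX ^ 2 * IY ⊔ IY ^ 2) le_rfl le_sup_left) ∧
      LinearMap.range
          (subQuotMap (J := IY ^ 2) (J' := IX * IY) (K := IY ^ 2 * IX)
            (K' := IX ^ 2 * IY)
            (by rw [pow_two]; exact Ideal.mul_mono hYX le_rfl)
            (calc IY ^ 2 * IX
                ≤ IX * IY * IX :=
                  Ideal.mul_mono (by rw [pow_two]; exact Ideal.mul_mono hYX le_rfl) le_rfl
              _ = IX ^ 2 * IY := by ring)) =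
        LinearMap.ker
          (subQuotMap (J := IX * IY) (J' := IX * IY) (K := IX ^ 2 * IY)
            (K' := IX ^ 2 * IY ⊔ IY ^ 2) le_rfl le_sup_left) := by
  have hXY2 : IX ^ 2 * IY ≤ IX ^ 3 := by
    rw [pow_succ]
    exact Ideal.mul_mono le_rfl hYX
  refine ⟨?_, ?_, ?_⟩
  · rw [← LinearMap.ker_eq_bot, eq_bot_iff]
    rintro x hx
    obtain ⟨⟨y, hy⟩, rfl⟩ := Submodule.Quotient.mk_surjective _ x
    rw [LinearMap.mem_ker, subQuotMap, Submodule.mapQ_apply,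
      Submodule.Quotient.mk_eq_zero] at hx
    simp only [Submodule.mem_comap, Submodule.subtype_apply] at hx
    rw [Submodule.mem_bot, Submodule.Quotient.mk_eq_zero]
    simp only [Submodule.mem_comap, Submodule.subtype_apply]
    rw [← h]
    exact ⟨hy, hXY2 hx⟩
  · intro x
    obtain ⟨y, rfl⟩ := Submodule.Quotient.mk_surjective _ x
    exact ⟨Submodule.Quotient.mk y, rfl⟩
  · apply le_antisymm
    · rintro _ ⟨z, rfl⟩
      obtain ⟨⟨y, hy⟩, rfl⟩ := Submodule.Quotient.mk_surjective _ z
      rw [LinearMap.mem_ker, subQuotMap, subQuotMap, Submodule.mapQ_apply,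
        Submodule.mapQ_apply, Submodule.Quotient.mk_eq_zero]
      simp only [Submodule.mem_comap, Submodule.subtype_apply, Submodule.inclusion_apply]
      exact Submodule.mem_sup_right hy
    · rintro z hz
      obtain ⟨⟨x, hx⟩, rfl⟩ := Submodule.Quotient.mk_surjective _ z
      rw [LinearMap.mem_ker, subQuotMap, Submodule.mapQ_apply,
        Submodule.Quotient.mk_eq_zero] at hz
      simp only [Submodule.mem_comap, Submodule.subtype_apply, Submodule.inclusion_apply] at hz
      obtain ⟨a, ha, b, hb, hab⟩ := Submodule.mem_sup.mp hz
      have hbXY : b ∈ IX * IY := by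
        have : b = x - a := by rw [← hab]; ring
        rw [this]
        exact Submodule.sub_mem _ hx
          ((show IX ^ 2 * IY ≤ IX * IY from by
            rw [pow_two, mul_assoc]; exact Ideal.mul_le_right (I := IX) (J := IX * IY)) ha)
      refine ⟨Submodule.Quotient.mk ⟨b, hb⟩, ?_⟩
      rw [subQuotMap, Submodule.mapQ_apply]
      rw [Submodule.Quotient.eq]
      simp only [Submodule.mem_comap, Submodule.subtype_apply, Submodule.inclusion_apply]
      show (b : R) - x ∈ IX ^ 2 * IY
      have : (b : R) - x = -a := by rw [← hab]; ring
      rw [this]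
      exact Submodule.neg_mem _ ha
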